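/- Let α, β be positive reals with α ≤ β, λ = α/β, σ₀² = 1/α, and λ± = σ₀²(1 ± √λ)². Then (α/(2πσ₀²λ)) ∫_{λ₋}^{λ₊} (−ln x)·√((λ₊−x)(x−λ₋)) dx = ln(α) − α/(2β). -/

import Mathlib

open Real MeasureTheory intervalIntegral Filter

lemma intCos (k : ℝ) (hk : k ≠ 0) : ∫ θ in (0:ℝ)..π, Real.cos (k*θ) = Real.sin (k*π)/k := by
  rw [intervalIntegral.integral_comp_mul_left (fun x => Real.cos x) hk]
  simp [integral_cos, div_eq_inv_mul]

lemma ptwise (n : ℕ) (θ : ℝ) : Real.cos (n*θ) * Real.sin θ^2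
    = 1/2 * Real.cos ((n:ℝ)*θ) - 1/4 * Real.cos (((n:ℝ)+2)*θ) - 1/4 * Real.cos (((n:ℝ)-2)*θ) := by
  have h1 : ((n:ℝ)+2)*θ = n*θ + 2*θ := by ring
  have h2 : ((n:ℝ)-2)*θ = n*θ - 2*θ := by ring
  rw [h1, h2, Real.cos_add, Real.cos_sub, Real.cos_two_mul, Real.sin_two_mul]
  linear_combination Real.cos ((n:ℝ)*θ) * (Real.sin_sq_add_cos_sq θ)

lemma intTrig (k : ℝ) : IntervalIntegrable (fun θ => Real.cos (k*θ)) volume 0 π :=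
  (Real.continuous_cos.comp (continuous_const.mul continuous_id)).intervalIntegrable _ _

lemma cosMoment (n : ℕ) (hn : 1 ≤ n) :
    ∫ θ in (0:ℝ)..π, Real.cos (n*θ) * Real.sin θ^2 = if n = 2 then -(π/4) else 0 := by
  have hrw : (∫ θ in (0:ℝ)..π, Real.cos (n*θ) * Real.sin θ^2)
      = ∫ θ in (0:ℝ)..π, (1/2 * Real.cos ((n:ℝ)*θ) - 1/4 * Real.cos (((n:ℝ)+2)*θ)
        - 1/4 * Real.cos (((n:ℝ)-2)*θ)) := by
    apply intervalIntegral.integral_congr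
    intro θ _; exact ptwise n θ
  rw [hrw]
  rw [intervalIntegral.integral_sub (((intTrig (n:ℝ)).const_mul _).sub ((intTrig ((n:ℝ)+2)).const_mul _)) ((intTrig ((n:ℝ)-2)).const_mul _),
    intervalIntegral.integral_sub ((intTrig (n:ℝ)).const_mul _) ((intTrig ((n:ℝ)+2)).const_mul _),
    intervalIntegral.integral_const_mul, intervalIntegral.integral_const_mul,
    intervalIntegral.integral_const_mul]
  have hn0 : ((n:ℝ)) ≠ 0 := Nat.cast_ne_zero.mpr (by omega)
  have hn2 : ((n:ℝ)+2) ≠ 0 := by positivity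
  have e1 : ∫ θ in (0:ℝ)..π, Real.cos ((n:ℝ)*θ) = 0 := by
    rw [intCos _ hn0, Real.sin_nat_mul_pi]; simp
  have e2 : ∫ θ in (0:ℝ)..π, Real.cos (((n:ℝ)+2)*θ) = 0 := by
    rw [intCos _ hn2]
    have : ((n:ℝ)+2) = ((n+2:ℕ):ℝ) := by push_cast; ring
    rw [this, Real.sin_nat_mul_pi]; simp
  rw [e1, e2]
  by_cases h2 : n = 2
  · subst h2
    norm_num
    ring
  · have hn2' : ((n:ℝ)-2) ≠ 0 := by
      intro h; apply h2
      have : (n:ℝ) = 2 := by linarith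
      exact_mod_cast this
    have e3 : ∫ θ in (0:ℝ)..π, Real.cos (((n:ℝ)-2)*θ) = 0 := by
      rw [intCos _ hn2']
      have : ((n:ℝ)-2) = (((n:ℤ)-2 : ℤ):ℝ) := by push_cast; ring
      rw [this, Real.sin_int_mul_pi]; simp
    rw [e3]
    simp [h2]

lemma seriesLog (q θ : ℝ) (hq0 : 0 ≤ q) (hq1 : q < 1) :
    HasSum (fun n : ℕ => 2 * Real.sin θ^2 * (q^n * Real.cos (n*θ) / n))
      (-(Real.log (1 - 2*q*Real.cos θ + q^2) * Real.sin θ^2)) := by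
  set z : ℂ := (q : ℂ) * Complex.exp (θ * Complex.I) with hz
  have hnz : ‖z‖ < 1 := by
    rw [hz, norm_mul, Complex.norm_real, Real.norm_eq_abs,
      Complex.norm_exp_ofReal_mul_I, mul_one, abs_of_nonneg hq0]
    exact hq1
  have h := Complex.hasSum_re (Complex.hasSum_taylorSeries_neg_log hnz)
  have hzn : ∀ n : ℕ, (z^n / n).re = q^n * Real.cos (n*θ) / n := by
    intro n
    have e1 : z^n = ((q^n : ℝ) : ℂ) * Complex.exp ((n*θ : ℝ) * Complex.I) := by
      rw [hz, mul_pow, ← Complex.exp_nat_mul]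
      push_cast
      ring_nf
    have e2 : z^n / n = ((q^n / n : ℝ) : ℂ) * Complex.exp ((n*θ : ℝ) * Complex.I) := by
      rw [e1]
      push_cast
      ring
    rw [e2, Complex.re_ofReal_mul, Complex.exp_ofReal_mul_I_re]
    push_cast
    ring
  have habs : Complex.normSq (1 - z) = 1 - 2*q*Real.cos θ + q^2 := by
    have hre : (1 - z).re = 1 - q * Real.cos θ := by
      simp [hz, Complex.sub_re, Complex.re_ofReal_mul, Complex.exp_ofReal_mul_I_re]
    have him : (1 - z).im = -(q * Real.sin θ) := by
      simp [hz, Complex.sub_im, Complex.im_ofReal_mul, Complex.exp_ofReal_mul_I_im]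
    rw [Complex.normSq_apply, hre, him]
    linear_combination (q^2) * (Real.sin_sq_add_cos_sq θ)
  have hlogre : ((-Complex.log (1 - z)).re) = -(Real.log (1 - 2*q*Real.cos θ + q^2) / 2) := by
    rw [Complex.neg_re, Complex.log_re]
    rw [show ‖1 - z‖ = Real.sqrt (1 - 2*q*Real.cos θ + q^2) by
      rw [← habs, Complex.norm_def]]
    rw [Real.log_sqrt (by rw [← habs]; exact Complex.normSq_nonneg _)]
  rw [funext hzn, hlogre] at h
  have := h.mul_left (2 * Real.sin θ^2)
  have he : (2 * Real.sin θ^2 * -(Real.log (1 - 2*q*Real.cos θ + q^2) / 2))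
      = -(Real.log (1 - 2*q*Real.cos θ + q^2) * Real.sin θ^2) := by ring
  rwa [he] at this

lemma keyQ (q : ℝ) (hq0 : 0 < q) (hq1 : q < 1) :
    ∫ θ in Set.Ioo (0:ℝ) π, Real.log (1 - 2*q*Real.cos θ + q^2) * Real.sin θ^2 = π*q^2/4 := by
  set F : ℕ → ℝ → ℝ := fun n θ => 2 * Real.sin θ^2 * (q^n * Real.cos (n*θ) / n) with hF
  have hcont : ∀ n : ℕ, Continuous (F n) := by
    intro n
    apply Continuous.mul
    · exact (continuous_const.mul ((Real.continuous_sin).pow 2))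
    · exact ((continuous_const.mul (Real.continuous_cos.comp (continuous_const.mul continuous_id))).div_const _)
  have hInt : ∀ n : ℕ, Integrable (F n) (volume.restrict (Set.Ioo (0:ℝ) π)) := by
    intro n
    exact ((hcont n).integrableOn_Ioc).mono_set Set.Ioo_subset_Ioc_self
  have hbd : ∀ n : ℕ, ∀ θ : ℝ, ‖F n θ‖ ≤ 2 * q^n := by
    intro n θ
    rcases n with _ | m
    · simp [hF]
    · set x : ℝ := q^(m+1) * |Real.cos (((m+1:ℕ):ℝ)*θ)| / ((m+1:ℕ):ℝ) with hx
      have h1 : ‖F (m+1) θ‖ = 2 * Real.sin θ^2 * x := by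
        rw [hF, hx]
        simp only [Real.norm_eq_abs, abs_mul, abs_div]
        rw [abs_of_nonneg (by positivity : (0:ℝ) ≤ 2), abs_of_nonneg (sq_nonneg (Real.sin θ)),
          abs_of_nonneg (by positivity : (0:ℝ) ≤ q^(m+1)),
          abs_of_nonneg (by positivity : (0:ℝ) ≤ ((m+1:ℕ):ℝ))]
      rw [h1]
      have hs : Real.sin θ^2 ≤ 1 := Real.sin_sq_le_one θ
      have hqn : (0:ℝ) ≤ q^(m+1) := by positivity
      have hx0 : 0 ≤ x := by rw [hx]; positivity
      have h2 : x ≤ q^(m+1) := by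
        rw [hx]
        have : q^(m+1) * |Real.cos (((m+1:ℕ):ℝ)*θ)| / ((m+1:ℕ):ℝ) ≤ q^(m+1) * 1 / 1 := by
          apply div_le_div₀ (by positivity) _ one_pos
          · exact_mod_cast Nat.one_le_iff_ne_zero.mpr (Nat.succ_ne_zero m)
          · exact mul_le_mul_of_nonneg_left (Real.abs_cos_le_one _) hqn
        simpa using this
      have h3 : 2 * Real.sin θ^2 * x ≤ 2 * 1 * x :=
        mul_le_mul_of_nonneg_right (by nlinarith) hx0
      linarith
  have hNorm : ∀ n : ℕ, (∫ θ in Set.Ioo (0:ℝ) π, ‖F n θ‖) ≤ (2*π) * q^n := by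
    intro n
    calc (∫ θ in Set.Ioo (0:ℝ) π, ‖F n θ‖) ≤ ∫ _ in Set.Ioo (0:ℝ) π, 2*q^n := by
          apply setIntegral_mono_on (hInt n).norm ((integrableOn_const_iff (C := (2:ℝ)*q^n)).mpr (Or.inr (by rw [Real.volume_Ioo]; exact ENNReal.ofReal_lt_top))) measurableSet_Ioo
          intro θ _; exact hbd n θ
      _ = (2*π) * q^n := by
          rw [setIntegral_const, Real.volume_real_Ioo_of_le Real.pi_pos.le, smul_eq_mul]
          ring
  have hSum : Summable fun n : ℕ => ∫ θ in Set.Ioo (0:ℝ) π, ‖F n θ‖ := by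
    apply Summable.of_nonneg_of_le (fun n => integral_nonneg (fun θ => norm_nonneg _)) hNorm
    exact (summable_geometric_of_lt_one hq0.le hq1).mul_left (2*π)
  have hswap := integral_tsum_of_summable_integral_norm (fun n => hInt n) hSum
  have htsum : ∀ θ : ℝ, (∑' n, F n θ) = -(Real.log (1 - 2*q*Real.cos θ + q^2) * Real.sin θ^2) :=
    fun θ => (seriesLog q θ hq0.le hq1).tsum_eq
  rw [funext htsum] at hswap
  have hFn : ∀ n : ℕ, (∫ θ in Set.Ioo (0:ℝ) π, F n θ)
      = (2 * q^n / n) * ∫ θ in (0:ℝ)..π, Real.cos (n*θ) * Real.sin θ^2 := by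
    intro n
    have e1 : ∀ θ, F n θ = (2 * q^n / n) * (Real.cos (n*θ) * Real.sin θ^2) := by
      intro θ; rw [hF]; ring
    rw [funext e1, MeasureTheory.integral_const_mul, intervalIntegral.integral_of_le Real.pi_pos.le,
      integral_Ioc_eq_integral_Ioo]
  have hval : ∀ n : ℕ, (∫ θ in Set.Ioo (0:ℝ) π, F n θ) = if n = 2 then -(π*q^2/4) else 0 := by
    intro n
    rcases Nat.eq_zero_or_pos n with h0 | h1
    · subst h0; rw [hFn]; norm_num
    · rw [hFn, cosMoment n h1]
      by_cases h2 : n = 2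
      · subst h2; norm_num; ring
      · simp [h2]
  have hts : (∑' n, ∫ θ in Set.Ioo (0:ℝ) π, F n θ) = -(π*q^2/4) := by
    rw [funext hval]
    exact tsum_eq_single 2 (fun n hn => by simp [hn]) |>.trans (by simp)
  rw [hts] at hswap
  have := hswap.symm
  rw [MeasureTheory.integral_neg] at this
  linarith [this]

lemma logBound (s θ : ℝ) (hs0 : 0 < s) (hs1 : s ≤ 1) (hθ : θ ∈ Set.Ioo (0:ℝ) π) :
    |Real.log (1 - 2*s*Real.cos θ + s^2) * Real.sin θ^2| ≤ |Real.log (2*s)| + 2 := by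
  obtain ⟨hθ0, hθπ⟩ := hθ
  have hc1 : Real.cos θ < 1 := by
    have h := Real.strictAntiOn_cos (Set.mem_Icc.mpr ⟨le_rfl, Real.pi_pos.le⟩)
      (Set.mem_Icc.mpr ⟨hθ0.le, hθπ.le⟩) hθ0
    simpa using h
  have hcm1 : -1 ≤ Real.cos θ := Real.neg_one_le_cos θ
  set u : ℝ := 1 - Real.cos θ with hu
  have hu0 : 0 < u := by simp [hu]; linarith
  set D : ℝ := 1 - 2*s*Real.cos θ + s^2 with hD
  have hDl : 2*s*u ≤ D := by rw [hD, hu]; nlinarith [sq_nonneg (1-s)]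
  have hD0 : 0 < D := lt_of_lt_of_le (by positivity) hDl
  have hD4 : D ≤ 4 := by rw [hD]; nlinarith
  have hsin : Real.sin θ^2 = u * (1 + Real.cos θ) := by
    rw [hu]; linear_combination Real.sin_sq_add_cos_sq θ
  have hsin1 : Real.sin θ^2 ≤ 1 := Real.sin_sq_le_one θ
  have hsin2u : Real.sin θ^2 ≤ 2*u := by rw [hsin]; nlinarith
  have hsin0 : 0 ≤ Real.sin θ^2 := sq_nonneg _
  rw [abs_mul, abs_of_nonneg hsin0]
  have habs0 := abs_nonneg (Real.log (2*s))
  by_cases hD1 : 1 ≤ D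
  · have h1 : |Real.log D| = Real.log D := abs_of_nonneg (Real.log_nonneg hD1)
    have h2 : Real.log D ≤ Real.log 4 := Real.log_le_log hD0 hD4
    have h3 : Real.log 4 ≤ 2 := by
      rw [show (4:ℝ)=2^2 by norm_num, Real.log_pow]
      push_cast
      nlinarith [Real.log_two_lt_d9]
    rw [h1]
    nlinarith [Real.log_nonneg hD1]
  · push_neg at hD1
    have hlD : |Real.log D| = -Real.log D := abs_of_nonpos (Real.log_nonpos hD0.le hD1.le)
    have hmono : Real.log (2*s*u) ≤ Real.log D := Real.log_le_log (by positivity) hDl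
    have hsplit : Real.log (2*s*u) = Real.log (2*s) + Real.log u :=
      Real.log_mul (by positivity) hu0.ne'
    have key : -Real.log D ≤ |Real.log (2*s)| - Real.log u := by
      have := neg_abs_le (Real.log (2*s))
      linarith
    rw [hlD]
    by_cases hu1 : u < 1
    · have hlu : 0 ≤ -Real.log u := by linarith [Real.log_nonpos hu0.le hu1.le]
      have huinv : -Real.log u ≤ u⁻¹ := by
        rw [← Real.log_inv]
        linarith [Real.log_le_sub_one_of_pos (inv_pos.mpr hu0)]
      have hmul : (-Real.log u) * Real.sin θ^2 ≤ 2 := by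
        calc (-Real.log u) * Real.sin θ^2 ≤ (-Real.log u)*(2*u) :=
              mul_le_mul_of_nonneg_left hsin2u hlu
          _ ≤ u⁻¹ * (2*u) := mul_le_mul_of_nonneg_right huinv (by positivity)
          _ = 2 := by field_simp
      have h4 : -Real.log D * Real.sin θ^2 ≤ (|Real.log (2*s)| - Real.log u) * Real.sin θ^2 :=
        mul_le_mul_of_nonneg_right key hsin0
      have h5 : |Real.log (2*s)| * Real.sin θ^2 ≤ |Real.log (2*s)| * 1 :=
        mul_le_mul_of_nonneg_left hsin1 habs0
      nlinarith
    · push_neg at hu1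
      have hlu : 0 ≤ Real.log u := Real.log_nonneg hu1
      have h4 : -Real.log D ≤ |Real.log (2*s)| := by linarith
      have hnD : 0 ≤ -Real.log D := by linarith [Real.log_nonpos hD0.le hD1.le]
      calc -Real.log D * Real.sin θ^2 ≤ |Real.log (2*s)| * 1 :=
            mul_le_mul h4 hsin1 hsin0 habs0
        _ ≤ |Real.log (2*s)| + 2 := by linarith

lemma key (s : ℝ) (hs0 : 0 < s) (hs1 : s ≤ 1) :
    ∫ θ in Set.Ioo (0:ℝ) π, Real.log (1 - 2*s*Real.cos θ + s^2) * Real.sin θ^2 = π*s^2/4 := by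
  rcases lt_or_eq_of_le hs1 with h1 | h1
  · exact keyQ s hs0 h1
  · subst h1
    -- s = 1 : dominated convergence with qₙ = 1 - 1/(n+2)
    set q : ℕ → ℝ := fun n => 1 - 1/((n:ℝ)+2) with hqdef
    have hq0 : ∀ n, 0 < q n := by
      intro n
      have h2 : (0:ℝ) < (n:ℝ)+2 := by positivity
      have : 1/((n:ℝ)+2) ≤ 1/2 := by
        apply div_le_div_of_nonneg_left (by norm_num) (by norm_num)
        simp
      simp only [hqdef]
      linarith
    have hqhalf : ∀ n, 1/2 ≤ q n := by
      intro n
      have : 1/((n:ℝ)+2) ≤ 1/2 := by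
        apply div_le_div_of_nonneg_left (by norm_num) (by norm_num)
        simp
      simp only [hqdef]; linarith
    have hq1 : ∀ n, q n < 1 := by
      intro n
      have : (0:ℝ) < 1/((n:ℝ)+2) := by positivity
      simp only [hqdef]; linarith
    have hqlim : Tendsto q atTop (nhds 1) := by
      have h0 : Tendsto (fun n : ℕ => 1/((n:ℝ)+2)) atTop (nhds 0) := by
        have := tendsto_one_div_add_atTop_nhds_zero_nat (𝕜 := ℝ)
        have hc := this.comp (tendsto_add_atTop_nat 1)
        convert hc using 2 with n
        simp [Function.comp]
        push_cast
        ring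
      have h1 : Tendsto (fun _ : ℕ => (1:ℝ)) atTop (nhds 1) := tendsto_const_nhds
      have := h1.sub h0
      simpa [hqdef] using this
    clear_value q
    set F : ℕ → ℝ → ℝ := fun n θ => Real.log (1 - 2*(q n)*Real.cos θ + (q n)^2) * Real.sin θ^2
      with hF
    set f : ℝ → ℝ := fun θ => Real.log (1 - 2*1*Real.cos θ + 1^2) * Real.sin θ^2 with hf
    have hmeas : ∀ n, AEStronglyMeasurable (F n) (volume.restrict (Set.Ioo (0:ℝ) π)) := by
      intro n
      apply Measurable.aestronglyMeasurable
      apply Measurable.mul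
      · exact Real.measurable_log.comp (by fun_prop)
      · fun_prop
    have hbound : ∀ n, ∀ᵐ θ ∂(volume.restrict (Set.Ioo (0:ℝ) π)), ‖F n θ‖ ≤ (3:ℝ) := by
      intro n
      filter_upwards [ae_restrict_mem measurableSet_Ioo] with θ hθ
      have hb := logBound (q n) θ (hq0 n) (hq1 n).le hθ
      have hh := hqhalf n
      have h2q : 1 ≤ 2 * q n := by linarith
      have h2q2 : 2 * q n ≤ 2 := by linarith [(hq1 n).le]
      have habs : |Real.log (2 * q n)| ≤ 1 := by
        rw [abs_of_nonneg (Real.log_nonneg h2q)]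
        calc Real.log (2 * q n) ≤ Real.log 2 := Real.log_le_log (by linarith) h2q2
          _ ≤ 1 := by nlinarith [Real.log_two_lt_d9]
      rw [Real.norm_eq_abs]
      calc |F n θ| ≤ |Real.log (2 * q n)| + 2 := hb
        _ ≤ 3 := by linarith
    have hlim : ∀ᵐ θ ∂(volume.restrict (Set.Ioo (0:ℝ) π)),
        Tendsto (fun n => F n θ) atTop (nhds (f θ)) := by
      filter_upwards [ae_restrict_mem measurableSet_Ioo] with θ hθ
      have hc1 : Real.cos θ < 1 := by
        have h := Real.strictAntiOn_cos (Set.mem_Icc.mpr ⟨le_rfl, Real.pi_pos.le⟩)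
          (Set.mem_Icc.mpr ⟨hθ.1.le, hθ.2.le⟩) hθ.1
        simpa using h
      have hpos : (0:ℝ) < 1 - 2*1*Real.cos θ + 1^2 := by nlinarith
      have hcont : ContinuousAt (fun s : ℝ => Real.log (1 - 2*s*Real.cos θ + s^2) * Real.sin θ^2) 1 := by
        apply ContinuousAt.mul _ continuousAt_const
        apply ContinuousAt.log _ (by linarith)
        fun_prop
      exact (hcont.tendsto.comp hqlim)
    have hDCT := MeasureTheory.tendsto_integral_of_dominated_convergence
      (fun _ => (3:ℝ)) hmeas (integrable_const _) hbound hlim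
    have hvals : (fun n => ∫ θ in Set.Ioo (0:ℝ) π, F n θ)
        = fun n => π * (q n)^2/4 := by
      funext n; exact keyQ (q n) (hq0 n) (hq1 n)
    rw [hvals] at hDCT
    have hlim2 : Tendsto (fun n => π * (q n)^2/4) atTop (nhds (π * 1^2/4)) := by
      apply Tendsto.div_const
      exact (tendsto_const_nhds.mul ((hqlim.pow 2)))
    exact tendsto_nhds_unique hDCT hlim2

theorem stmt8 (α β lm lp : ℝ) (hα : 1 ≤ α) (hαβ : α ≤ β)
    (hlm : lm = (1 / α) * (1 - Real.sqrt (α / β)) ^ 2)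
    (hlp : lp = (1 / α) * (1 + Real.sqrt (α / β)) ^ 2) :
    α / (2 * Real.pi * (1 / α) * (α / β)) *
      ∫ x in lm..lp, (-Real.log x) * Real.sqrt ((lp - x) * (x - lm)) =
      Real.log α - α / (2 * β) := by
  have hα0 : (0:ℝ) < α := by linarith
  have hβ0 : (0:ℝ) < β := by linarith
  have hq0 : (0:ℝ) < α/β := by positivity
  have hq1 : α/β ≤ 1 := (div_le_one hβ0).mpr hαβ
  set s : ℝ := Real.sqrt (α/β) with hsdef
  have hs0 : 0 < s := Real.sqrt_pos.mpr hq0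
  have hs2 : s^2 = α/β := Real.sq_sqrt hq0.le
  have hs1 : s ≤ 1 := by
    rw [show (1:ℝ) = Real.sqrt 1 by simp [Real.sqrt_one], hsdef]
    exact Real.sqrt_le_sqrt hq1
  set A : ℝ := 1/α with hAdef
  have hA0 : 0 < A := by positivity
  set c : ℝ := A * (1 + s^2) with hcdef
  set r : ℝ := 2*A*s with hrdef
  have hr0 : 0 < r := by positivity
  have hlm' : lm = c - r := by rw [hlm, hcdef, hrdef, hAdef]; ring
  have hlp' : lp = c + r := by rw [hlp, hcdef, hrdef, hAdef]; ring
  have hlmlp : lm ≤ lp := by rw [hlm', hlp']; linarith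
  set g : ℝ → ℝ := fun x => (-Real.log x) * Real.sqrt ((lp - x) * (x - lm)) with hgdef
  -- cos bounds on Ioo 0 π
  have hcos : ∀ θ ∈ Set.Ioo (0:ℝ) π, -1 < Real.cos θ ∧ Real.cos θ < 1 := by
    intro θ hθ
    constructor
    · have h := Real.strictAntiOn_cos (Set.mem_Icc.mpr ⟨hθ.1.le, hθ.2.le⟩)
        (Set.mem_Icc.mpr ⟨Real.pi_pos.le, le_rfl⟩) hθ.2
      simpa [Real.cos_pi] using h
    · have h := Real.strictAntiOn_cos (Set.mem_Icc.mpr ⟨le_rfl, Real.pi_pos.le⟩)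
        (Set.mem_Icc.mpr ⟨hθ.1.le, hθ.2.le⟩) hθ.1
      simpa using h
  -- substitution
  have himg : (fun θ => c - r * Real.cos θ) '' (Set.Ioo 0 π) = Set.Ioo lm lp := by
    apply Set.Subset.antisymm
    · rintro x ⟨θ, hθ, rfl⟩
      obtain ⟨hm1, h1⟩ := hcos θ hθ
      simp only [Set.mem_Ioo]
      constructor
      · rw [hlm']
        nlinarith [mul_lt_mul_of_pos_left h1 hr0]
      · rw [hlp']
        nlinarith [mul_lt_mul_of_pos_left hm1 hr0]
    · have hcont : ContinuousOn (fun θ => c - r * Real.cos θ) (Set.Icc 0 π) :=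
        (continuous_const.sub (continuous_const.mul Real.continuous_cos)).continuousOn
      have h := intermediate_value_Ioo Real.pi_pos.le hcont
      simpa [Real.cos_pi, hlm', hlp', mul_comm] using h
  have hderiv : ∀ θ ∈ Set.Ioo (0:ℝ) π, HasDerivWithinAt (fun θ => c - r * Real.cos θ)
      (r * Real.sin θ) (Set.Ioo 0 π) θ := by
    intro θ _
    have h : HasDerivAt (fun θ => c - r * Real.cos θ) (r * Real.sin θ) θ := by
      simpa using ((Real.hasDerivAt_cos θ).const_mul r).const_sub c
    exact h.hasDerivWithinAt
  have hinj : Set.InjOn (fun θ => c - r * Real.cos θ) (Set.Ioo 0 π) := by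
    intro a ha b hb hab
    simp only at hab
    have h : Real.cos a = Real.cos b := by
      have h2 : r * Real.cos a = r * Real.cos b := by linarith
      exact mul_left_cancel₀ hr0.ne' h2
    exact Real.injOn_cos (Set.mem_Icc.mpr ⟨ha.1.le, ha.2.le⟩)
      (Set.mem_Icc.mpr ⟨hb.1.le, hb.2.le⟩) h
  have hsub : ∫ x in Set.Ioo lm lp, g x
      = ∫ θ in Set.Ioo (0:ℝ) π, |r * Real.sin θ| • g (c - r * Real.cos θ) := by
    rw [← himg]
    exact integral_image_eq_integral_abs_deriv_smul measurableSet_Ioo hderiv hinj g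
  -- rewrite the θ-integrand
  have hcongr : Set.EqOn (fun θ => |r * Real.sin θ| • g (c - r * Real.cos θ))
      (fun θ => r^2 * ((-Real.log A) * Real.sin θ^2
        + (-1) * (Real.log (1 - 2*s*Real.cos θ + s^2) * Real.sin θ^2))) (Set.Ioo 0 π) := by
    intro θ hθ
    obtain ⟨hm1, h1⟩ := hcos θ hθ
    have hsin0 : 0 < Real.sin θ := Real.sin_pos_of_pos_of_lt_pi hθ.1 hθ.2
    have habs : |r * Real.sin θ| = r * Real.sin θ := abs_of_pos (by positivity)
    have hD0 : 0 < 1 - 2*s*Real.cos θ + s^2 := by nlinarith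
    have hxval : c - r * Real.cos θ = A * (1 - 2*s*Real.cos θ + s^2) := by
      rw [hcdef, hrdef]; ring
    have hlog : Real.log (c - r * Real.cos θ)
        = Real.log A + Real.log (1 - 2*s*Real.cos θ + s^2) := by
      rw [hxval, Real.log_mul hA0.ne' hD0.ne']
    have hsqrt : Real.sqrt ((lp - (c - r * Real.cos θ)) * ((c - r * Real.cos θ) - lm))
        = r * Real.sin θ := by
      have e1 : (lp - (c - r * Real.cos θ)) * ((c - r * Real.cos θ) - lm)
          = (r * Real.sin θ)^2 := by
        rw [hlp', hlm']
        have hpy := Real.sin_sq_add_cos_sq θ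
        linear_combination (-(r^2)) * hpy
      rw [e1, Real.sqrt_sq (by positivity)]
    simp only [hgdef, smul_eq_mul, habs, hsqrt, hlog]
    ring
  rw [intervalIntegral.integral_of_le hlmlp, integral_Ioc_eq_integral_Ioo]
  rw [hsub, setIntegral_congr_fun measurableSet_Ioo hcongr]
  -- pull out r^2 and split
  rw [MeasureTheory.integral_const_mul]
  have hI1 : IntegrableOn (fun θ => (-Real.log A) * Real.sin θ^2) (Set.Ioo (0:ℝ) π) :=
    ((continuous_const.mul ((Real.continuous_sin).pow 2)).integrableOn_Ioc).mono_set
      Set.Ioo_subset_Ioc_self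
  have hI2 : IntegrableOn (fun θ => (-1:ℝ) * (Real.log (1 - 2*s*Real.cos θ + s^2) * Real.sin θ^2))
      (Set.Ioo (0:ℝ) π) := by
    apply Integrable.mono' (g := fun _ => |Real.log (2*s)| + 2)
      (integrable_const _)
    · apply Measurable.aestronglyMeasurable
      apply Measurable.mul measurable_const
      exact (Real.measurable_log.comp (by fun_prop)).mul (by fun_prop)
    · filter_upwards [ae_restrict_mem measurableSet_Ioo] with θ hθ
      have := logBound s θ hs0 hs1 hθ
      rw [Real.norm_eq_abs, abs_mul, abs_neg, abs_one, one_mul]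
      exact this
  rw [MeasureTheory.integral_add hI1 hI2, MeasureTheory.integral_const_mul,
    MeasureTheory.integral_const_mul, key s hs0 hs1]
  have hsinsq : ∫ θ in Set.Ioo (0:ℝ) π, Real.sin θ^2 = π/2 := by
    rw [← integral_Ioc_eq_integral_Ioo, ← intervalIntegral.integral_of_le Real.pi_pos.le,
      integral_sin_sq]
    simp
  rw [hsinsq]
  -- final algebra
  have hlogA : Real.log A = -Real.log α := by rw [hAdef, one_div, Real.log_inv]
  have hβs : β = α/s^2 := by
    rw [hs2]
    field_simp
  rw [hlogA, hrdef, hAdef, ← hs2, hβs]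
  field_simp
  ring
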